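/- For every n, the quotient ring ℤ[C_m]/⟨1 - nτ⟩ (τ a generator of C_m, m finite) is isomorphic as an abelian group to ℤ/(n^m - 1)ℤ, with τ acting as multiplication by n^{m-1}. -/

import Mathlib

section aux

variable (n m : ℕ)

lemma bf_pow_cast (hn : 1 ≤ n) : ((n : ZMod (n ^ m - 1)) ^ m) = 1 := by
  have h1 : 1 ≤ n ^ m := Nat.one_le_pow _ _ hn
  have : ((n ^ m : ℕ) : ZMod (n ^ m - 1)) = ((n ^ m - 1 : ℕ) : ZMod (n ^ m - 1)) + 1 := by
    push_cast [h1]; ring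
  rw [ZMod.natCast_self, zero_add] at this
  simpa using this

noncomputable def bfU (hn : 1 ≤ n) (hm : 1 ≤ m) : (ZMod (n ^ m - 1))ˣ :=
  have key : (n : ZMod (n ^ m - 1)) * (n : ZMod (n ^ m - 1)) ^ (m - 1) = 1 := by
    rw [← pow_succ', show m - 1 + 1 = m by omega]
    exact bf_pow_cast n m hn
  { val := n
    inv := (n : ZMod (n ^ m - 1)) ^ (m - 1)
    val_inv := key
    inv_val := by rw [mul_comm]; exact key }

lemma bfU_pow_m (hn : 1 ≤ n) (hm : 1 ≤ m) : (bfU n m hn hm) ^ m = 1 := by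
  ext
  push_cast [bfU]
  exact bf_pow_cast n m hn

noncomputable def bfF (hn : 1 ≤ n) (hm : 1 ≤ m) : ℤ →+ Additive (ZMod (n ^ m - 1))ˣ :=
  zmultiplesHom _ (Additive.ofMul (bfU n m hn hm)⁻¹)

lemma bfF_m (hn : 1 ≤ n) (hm : 1 ≤ m) : bfF n m hn hm (m : ℤ) = 0 := by
  have : (bfU n m hn hm)⁻¹ ^ (m : ℤ) = 1 := by
    rw [zpow_natCast, inv_pow, bfU_pow_m n m hn hm, inv_one]
  simpa [bfF, zmultiplesHom_apply] using congrArg Additive.ofMul this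

noncomputable def bfG (hn : 1 ≤ n) (hm : 1 ≤ m) : Multiplicative (ZMod m) →* ZMod (n ^ m - 1) :=
  (Units.coeHom _).comp
    (AddMonoidHom.toMultiplicativeLeft (ZMod.lift m ⟨bfF n m hn hm, bfF_m n m hn hm⟩))

lemma bfG_one (hn : 1 ≤ n) (hm : 1 ≤ m) :
    bfG n m hn hm (Multiplicative.ofAdd 1) = ((bfU n m hn hm)⁻¹ : (ZMod (n ^ m - 1))ˣ) := by
  have h1 : (1 : ZMod m) = ((1 : ℤ) : ZMod m) := by push_cast; ring
  simp only [bfG, MonoidHom.comp_apply, Units.coeHom_apply,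
    AddMonoidHom.coe_toMultiplicativeLeft, Function.comp_apply]
  rw [show (Multiplicative.toAdd (Multiplicative.ofAdd (1 : ZMod m))) = ((1 : ℤ) : ZMod m) from h1,
    ZMod.lift_coe]
  simp [bfF, zmultiplesHom_apply]

noncomputable def bfPhi (hn : 1 ≤ n) (hm : 1 ≤ m) :
    MonoidAlgebra ℤ (Multiplicative (ZMod m)) →+* ZMod (n ^ m - 1) :=
  ((MonoidAlgebra.lift ℤ (ZMod (n ^ m - 1)) (Multiplicative (ZMod m))) (bfG n m hn hm)).toRingHom

lemma bfPhi_of (hn : 1 ≤ n) (hm : 1 ≤ m) (a : Multiplicative (ZMod m)) :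
    bfPhi n m hn hm (MonoidAlgebra.of ℤ _ a) = bfG n m hn hm a := by
  simp [bfPhi]

lemma bfPhi_gen (hn : 1 ≤ n) (hm : 1 ≤ m) :
    bfPhi n m hn hm ((1 : MonoidAlgebra ℤ (Multiplicative (ZMod m))) -
      (n : MonoidAlgebra ℤ (Multiplicative (ZMod m))) *
        MonoidAlgebra.of ℤ (Multiplicative (ZMod m)) (Multiplicative.ofAdd 1)) = 0 := by
  rw [map_sub, map_mul, map_one, map_natCast, bfPhi_of, bfG_one]
  have := (bfU n m hn hm).mul_inv
  rw [show ((bfU n m hn hm : (ZMod (n^m-1))ˣ) : ZMod (n^m-1)) = (n : ZMod (n^m-1)) from rfl] at this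
  rw [this]; ring

end aux

theorem bf_rose_group_ring (n : ℕ) (hn : 1 ≤ n) (m : ℕ) (hm : 2 ≤ m) :
    ∃ e : (MonoidAlgebra ℤ (Multiplicative (ZMod m)) ⧸
        Ideal.span {(1 : MonoidAlgebra ℤ (Multiplicative (ZMod m))) -
          (n : MonoidAlgebra ℤ (Multiplicative (ZMod m))) *
            MonoidAlgebra.of ℤ (Multiplicative (ZMod m)) (Multiplicative.ofAdd 1)}) ≃+
      ZMod (n ^ m - 1),
      ∀ q, e (Ideal.Quotient.mk _
          (MonoidAlgebra.of ℤ (Multiplicative (ZMod m)) (Multiplicative.ofAdd 1)) * q) =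
        (n : ZMod (n ^ m - 1)) ^ (m - 1) * e q := by
  haveI : NeZero m := ⟨by omega⟩
  have hm1 : 1 ≤ m := by omega
  set A := MonoidAlgebra ℤ (Multiplicative (ZMod m)) with hA
  set τ : A := MonoidAlgebra.of ℤ (Multiplicative (ZMod m)) (Multiplicative.ofAdd 1) with hτdef
  set I : Ideal A := Ideal.span {(1 : A) - (n : A) * τ} with hI
  set R := A ⧸ I with hR
  set mk : A →+* R := Ideal.Quotient.mk I with hmk
  have hgen : mk ((1 : A) - (n : A) * τ) = 0 :=
    Ideal.Quotient.eq_zero_iff_mem.2 (Ideal.subset_span rfl)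
  have hrel : (n : R) * mk τ = 1 := by
    have := hgen
    rw [map_sub, map_one, map_mul, map_natCast, sub_eq_zero] at this
    exact this.symm
  have hτm : τ ^ m = 1 := by
    rw [hτdef, ← map_pow, ← ofAdd_nsmul]
    have : m • (1 : ZMod m) = 0 := by simp [nsmul_eq_mul]
    rw [this]
    simp [MonoidAlgebra.of_apply]
    rfl
  have hnm : (n : R) ^ m = 1 := by
    have : ((n : R) * mk τ) ^ m = 1 := by rw [hrel, one_pow]
    rw [mul_pow, ← map_pow, hτm, map_one, mul_one] at this
    exact this
  have hT : mk τ = (n : R) ^ (m - 1) := by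
    have h1 : (n : R) ^ (m - 1) * ((n : R) * mk τ) = (n : R) ^ m * mk τ := by
      rw [← mul_assoc, ← pow_succ, show m - 1 + 1 = m by omega]
    rw [hrel, mul_one, hnm, one_mul] at h1
    exact h1.symm
  have hsurj : ∀ x : R, ∃ z : ℤ, ((z : ℤ) : R) = x := by
    intro x
    obtain ⟨p, rfl⟩ := Ideal.Quotient.mk_surjective x
    induction p using MonoidAlgebra.induction_on with
    | of a =>
      refine ⟨(n : ℤ) ^ ((m - 1) * (Multiplicative.toAdd a).val), ?_⟩
      have ha : a = (Multiplicative.ofAdd (1 : ZMod m)) ^ (Multiplicative.toAdd a).val := by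
        rw [← ofAdd_nsmul]
        simp [nsmul_eq_mul, ZMod.natCast_val, ZMod.cast_id]
      have : MonoidAlgebra.of ℤ (Multiplicative (ZMod m)) a = τ ^ (Multiplicative.toAdd a).val := by
        rw [hτdef, ← map_pow, ← ha]
      rw [this, map_pow, hT, ← pow_mul]
      push_cast
      ring
    | add f g hf hg =>
      obtain ⟨zf, hzf⟩ := hf
      obtain ⟨zg, hzg⟩ := hg
      exact ⟨zf + zg, by rw [map_add, ← hzf, ← hzg]; push_cast; ring⟩
    | smul r f hf =>
      obtain ⟨z, hz⟩ := hf
      refine ⟨r * z, ?_⟩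
      rw [zsmul_eq_mul, map_mul, map_intCast, ← hz]
      exact Int.cast_mul r z
  have hker : ∀ a ∈ I, bfPhi n m hn hm1 a = 0 := by
    intro a ha
    rw [hI, Ideal.mem_span_singleton] at ha
    obtain ⟨c, rfl⟩ := ha
    rw [map_mul, bfPhi_gen n m hn hm1, zero_mul]
  set φ : R →+* ZMod (n ^ m - 1) := Ideal.Quotient.lift I (bfPhi n m hn hm1) hker with hφ
  have hφint : ∀ z : ℤ, φ ((z : ℤ) : R) = (z : ZMod (n ^ m - 1)) := fun z => map_intCast φ z
  have hbij : Function.Bijective φ := by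
    constructor
    · intro x y hxy
      obtain ⟨a, rfl⟩ := hsurj x
      obtain ⟨b, rfl⟩ := hsurj y
      rw [hφint, hφint] at hxy
      have hdvd : ((n ^ m - 1 : ℕ) : ℤ) ∣ b - a :=
        ((ZMod.intCast_eq_intCast_iff _ _ _).mp hxy).dvd
      obtain ⟨c, hc⟩ := hdvd
      have hNR : ((n ^ m - 1 : ℕ) : R) = 0 := by
        have h1 : 1 ≤ n ^ m := Nat.one_le_pow _ _ hn
        push_cast [h1]
        rw [sub_eq_zero]
        exact hnm
      have h2 : ((b : ℤ) : R) - ((a : ℤ) : R) = 0 := by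
        have h3 := congrArg (fun z : ℤ => ((z : ℤ) : R)) hc
        push_cast at h3
        rw [h3]; exact (Int.cast_mul _ _).trans (by erw [Int.cast_natCast, hNR, zero_mul])
      exact (sub_eq_zero.mp h2).symm
    · intro y
      obtain ⟨z, rfl⟩ := ZMod.intCast_surjective (n := n ^ m - 1) y
      exact ⟨((z : ℤ) : R), hφint z⟩
  refine ⟨AddEquiv.ofBijective φ.toAddMonoidHom hbij, ?_⟩
  intro q
  have : φ (mk τ * q) = (n : ZMod (n ^ m - 1)) ^ (m - 1) * φ q := by
    rw [map_mul, hT, map_pow, map_natCast]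
  simpa using this
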